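/- Every skew-amenable continuous action of a locally compact Hausdorff group on a compact Hausdorff space is amenable. -/

import Mathlib

open Filter Topology MeasureTheory UniformConvergence

/-- `Δ(G)`: finitely supported probability densities on `G`. -/
def IsDelta {G : Type*} (μ : G → ℝ) : Prop :=
  (Function.support μ).Finite ∧ (∀ x, 0 ≤ μ x) ∧ ∑ᶠ x, μ x = 1

/-- The pairing `⟨μ, f⟩ = ∑ₓ μ(x) · f(x)`. -/
noncomputable def dpair {G : Type*} (μ f : G → ℝ) : ℝ := ∑ᶠ x, μ x * f x

/-- Left-translation action on densities: `(g · μ)(x) = μ(g⁻¹x)`. -/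
def actD {G : Type*} [Group G] (g : G) (μ : G → ℝ) : G → ℝ := fun x => μ (g⁻¹ * x)

/-- Action on functionals: `(g · ξ)(f) = ξ(f ∘ λ_g)`. -/
def actF {G : Type*} [Group G] (g : G) (ξ : (G → ℝ) → ℝ) : (G → ℝ) → ℝ :=
  fun f => ξ fun x => f (g * x)

/-- The functional `f ↦ ⟨μ, f⟩` associated with a density `μ`. -/
noncomputable def toFunc {G : Type*} (μ : G → ℝ) : (G → ℝ) → ℝ := fun f => dpair μ f

/-- Bounded right-uniformly continuous functions. -/
def IsRUCB {G : Type*} [Group G] [TopologicalSpace G] (f : G → ℝ) : Prop :=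
  (∃ C : ℝ, ∀ x, |f x| ≤ C) ∧
  ∀ ε > (0 : ℝ), ∃ U ∈ nhds (1 : G), ∀ u ∈ U, ∀ x : G, |f x - f (u * x)| ≤ ε

/-- RUEB sets: sup-norm bounded, right-uniformly equicontinuous. -/
def IsRUEB {G : Type*} [Group G] [TopologicalSpace G] (B : Set (G → ℝ)) : Prop :=
  (∃ C : ℝ, ∀ f ∈ B, ∀ x : G, |f x| ≤ C) ∧
  ∀ ε > (0 : ℝ), ∃ U ∈ nhds (1 : G), ∀ u ∈ U, ∀ f ∈ B, ∀ x : G, |f x - f (u * x)| ≤ ε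

/-- Bounded left-uniformly continuous functions. -/
def IsLUCB {G : Type*} [Group G] [TopologicalSpace G] (f : G → ℝ) : Prop :=
  (∃ C : ℝ, ∀ x, |f x| ≤ C) ∧
  ∀ ε > (0 : ℝ), ∃ U ∈ nhds (1 : G), ∀ u ∈ U, ∀ x : G, |f x - f (x * u)| ≤ ε

/-- LUEB sets: sup-norm bounded, left-uniformly equicontinuous. -/
def IsLUEB {G : Type*} [Group G] [TopologicalSpace G] (B : Set (G → ℝ)) : Prop :=
  (∃ C : ℝ, ∀ f ∈ B, ∀ x : G, |f x| ≤ C) ∧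
  ∀ ε > (0 : ℝ), ∃ U ∈ nhds (1 : G), ∀ u ∈ U, ∀ f ∈ B, ∀ x : G, |f x - f (x * u)| ≤ ε

/-- The UEB uniformity (uniform convergence on RUEB sets) on the space of
functionals on functions on `G`. -/
noncomputable def uebUniformityR (G : Type*) [Group G] [TopologicalSpace G] :
    UniformSpace ((G → ℝ) → ℝ) :=
  ⨅ (B : Set (G → ℝ)) (_ : IsRUEB B),
    UniformSpace.comap (fun ξ => UniformFun.ofFun fun f : B => ξ (f : G → ℝ))
      (UniformFun.uniformSpace (↥B) ℝ)

/-- The UEB topology associated with the right uniformity. -/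
noncomputable def uebTopR (G : Type*) [Group G] [TopologicalSpace G] :
    TopologicalSpace ((G → ℝ) → ℝ) := (uebUniformityR G).toTopologicalSpace

/-- `Mean_u(G_r)`: the UEB-closure of `Δ(G)` inside the functionals. -/
noncomputable def MeanUR (G : Type*) [Group G] [TopologicalSpace G] :
    Set ((G → ℝ) → ℝ) :=
  @closure _ (uebTopR G) (toFunc '' {μ : G → ℝ | IsDelta μ})

/-- The UEB uniformity (uniform convergence on LUEB sets). -/
noncomputable def uebUniformityL (G : Type*) [Group G] [TopologicalSpace G] :
    UniformSpace ((G → ℝ) → ℝ) :=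
  ⨅ (B : Set (G → ℝ)) (_ : IsLUEB B),
    UniformSpace.comap (fun ξ => UniformFun.ofFun fun f : B => ξ (f : G → ℝ))
      (UniformFun.uniformSpace (↥B) ℝ)

/-- The UEB topology associated with the left uniformity. -/
noncomputable def uebTopL (G : Type*) [Group G] [TopologicalSpace G] :
    TopologicalSpace ((G → ℝ) → ℝ) := (uebUniformityL G).toTopologicalSpace

/-- `Mean_u(G_ℓ)`: the UEB-closure of `Δ(G)`. -/
noncomputable def MeanUL (G : Type*) [Group G] [TopologicalSpace G] :
    Set ((G → ℝ) → ℝ) :=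
  @closure _ (uebTopL G) (toFunc '' {μ : G → ℝ | IsDelta μ})

/-- Amenability of an action of a topological group on a topological space. -/
def AmenableAction {G : Type*} [Group G] [TopologicalSpace G]
    {X : Type*} [TopologicalSpace X] (act : G → X → X) : Prop :=
  ∃ (ι : Type) (pι : Preorder ι) (_ : Nonempty ι)
    (_ : IsDirected ι fun a b => pι.le a b)
    (μ : ι → X → (G → ℝ) → ℝ),
    (∀ i x, μ i x ∈ MeanUR G) ∧
    (∀ i, @Continuous X ((G → ℝ) → ℝ) inferInstance (uebTopR G) (μ i)) ∧
    ∀ (g : G) (B : Set (G → ℝ)), IsRUEB B → ∀ ε > (0 : ℝ),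
      ∃ i₀, ∀ i, pι.le i₀ i → ∀ x, ∀ f ∈ B,
        |actF g (μ i x) f - μ i (act g x) f| ≤ ε

/-- Skew-amenability of an action. -/
def SkewAmenableAction {G : Type*} [Group G] [TopologicalSpace G]
    {X : Type*} [TopologicalSpace X] (act : G → X → X) : Prop :=
  ∃ (ι : Type) (pι : Preorder ι) (_ : Nonempty ι)
    (_ : IsDirected ι fun a b => pι.le a b)
    (μ : ι → X → (G → ℝ) → ℝ),
    (∀ i x, μ i x ∈ MeanUL G) ∧
    (∀ i, @Continuous X ((G → ℝ) → ℝ) inferInstance (uebTopL G) (μ i)) ∧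
    ∀ (g : G) (B : Set (G → ℝ)), IsLUEB B → ∀ ε > (0 : ℝ),
      ∃ i₀, ∀ i, pι.le i₀ i → ∀ x, ∀ f ∈ B,
        |actF g (μ i x) f - μ i (act g x) f| ≤ ε

/-- AD-amenability (Anantharaman-Delaroche) of an action of a locally compact
group, with respect to a left Haar measure `ν`. -/
def ADAmenableAction {G : Type*} [Group G] [TopologicalSpace G] [MeasurableSpace G]
    (ν : Measure G) {X : Type*} [TopologicalSpace X] (act : G → X → X) : Prop :=
  ∃ (ι : Type) (pι : Preorder ι) (_ : Nonempty ι)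
    (_ : IsDirected ι fun a b => pι.le a b)
    (μ : ι → X → G → ℝ),
    (∀ i x, Integrable (μ i x) ν ∧ (∀ᵐ t ∂ν, 0 ≤ μ i x t) ∧ ∫ t, μ i x t ∂ν = 1) ∧
    (∀ i (h : G → ℝ), Continuous h → Tendsto h (cocompact G) (nhds 0) →
      Continuous fun x => ∫ t, h t * μ i x t ∂ν) ∧
    ∀ K : Set G, IsCompact K → ∀ ε > (0 : ℝ),
      ∃ i₀, ∀ i, pι.le i₀ i → ∀ g ∈ K, ∀ x,
        ∫ t, |μ i x (g⁻¹ * t) - μ i (act g x) t| ∂ν ≤ ε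

/-- Amenability of a topological group: a left-invariant mean on `RUCB(G)`. -/
def AmenableGroup (G : Type*) [Group G] [TopologicalSpace G] : Prop :=
  ∃ m : (G → ℝ) → ℝ,
    (∀ f h : G → ℝ, IsRUCB f → IsRUCB h → m (f + h) = m f + m h) ∧
    (∀ (c : ℝ) (f : G → ℝ), IsRUCB f → m (c • f) = c * m f) ∧
    (∀ f : G → ℝ, IsRUCB f → (∀ x, 0 ≤ f x) → 0 ≤ m f) ∧
    m (fun _ => 1) = 1 ∧
    ∀ (g : G) (f : G → ℝ), IsRUCB f → m (fun x => f (g * x)) = m f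

/-- Well-placed subgroups: there is an `H`-left-equivariant, right-uniformly
continuous map `G → Mean_u(H_r)` (uniform continuity spelled out via the basic
entourages of the right uniformity of `G` and the UEB pseudometrics). -/
def WellPlaced {G : Type*} [Group G] [TopologicalSpace G] (H : Subgroup G) : Prop :=
  ∃ φ : G → ((↥H → ℝ) → ℝ),
    (∀ g, φ g ∈ MeanUR ↥H) ∧
    (∀ (h : ↥H) (g : G), φ ((h : G) * g) = actF h (φ g)) ∧
    ∀ B : Set (↥H → ℝ), IsRUEB B → ∀ ε > (0 : ℝ), ∃ U ∈ nhds (1 : G),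
      ∀ x y : G, x * y⁻¹ ∈ U → ∀ f ∈ B, |φ x f - φ y f| ≤ ε

/-! ### Auxiliary machinery for the proof -/

section SkewAux

open Set Function

variable {G : Type*} [Group G] [TopologicalSpace G]

theorem skewaux_isRUEB_empty : IsRUEB (∅ : Set (G → ℝ)) :=
  ⟨⟨0, by simp⟩, fun ε hε => ⟨Set.univ, Filter.univ_mem, by simp⟩⟩

theorem skewaux_isRUEB_union {B₁ B₂ : Set (G → ℝ)} (h₁ : IsRUEB B₁) (h₂ : IsRUEB B₂) :
    IsRUEB (B₁ ∪ B₂) := by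
  obtain ⟨⟨C₁, hC₁⟩, h₁'⟩ := h₁
  obtain ⟨⟨C₂, hC₂⟩, h₂'⟩ := h₂
  constructor
  · exact ⟨max C₁ C₂, fun f hf x => hf.elim (fun h => (hC₁ f h x).trans (le_max_left _ _))
      (fun h => (hC₂ f h x).trans (le_max_right _ _))⟩
  · intro ε hε
    obtain ⟨U₁, hU₁, hU₁'⟩ := h₁' ε hε
    obtain ⟨U₂, hU₂, hU₂'⟩ := h₂' ε hε
    exact ⟨U₁ ∩ U₂, Filter.inter_mem hU₁ hU₂, fun u hu f hf x =>
      hf.elim (fun h => hU₁' u hu.1 f h x) (fun h => hU₂' u hu.2 f h x)⟩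

variable [IsTopologicalGroup G]

theorem skewaux_continuous_of_mem_RUEB {B : Set (G → ℝ)} (hB : IsRUEB B) {f : G → ℝ}
    (hf : f ∈ B) : Continuous f := by
  rw [continuous_iff_continuousAt]
  intro x
  rw [ContinuousAt, Metric.tendsto_nhds]
  intro ε hε
  obtain ⟨U, hU, hU'⟩ := hB.2 (ε / 2) (by linarith)
  have hmap : Filter.map (fun u : G => u * x) (𝓝 1) = 𝓝 x := by
    simpa using map_mul_right_nhds (1 : G) x
  rw [← hmap, Filter.eventually_map]
  filter_upwards [hU] with u hu
  have := hU' u hu f hf x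
  rw [Real.dist_eq]
  calc |f (u * x) - f x| = |f x - f (u * x)| := abs_sub_comm _ _
    _ ≤ ε / 2 := this
    _ < ε := by linarith

theorem skewaux_cont_comp {α β γ : Type*} {tα : TopologicalSpace α}
    {tβ : TopologicalSpace β} {tγ : TopologicalSpace γ} {g : β → γ} {f : α → β}
    (hg : @Continuous _ _ tβ tγ g) (hf : @Continuous _ _ tα tβ f) :
    @Continuous _ _ tα tγ (fun x => g (f x)) := hg.comp hf

/-- Evaluation of a functional on the members of a family `B`. -/
noncomputable def skewauxEval (B : Set (G → ℝ)) : ((G → ℝ) → ℝ) → (↥B →ᵤ ℝ) :=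
  fun ξ => UniformFun.ofFun fun f => ξ (f : G → ℝ)

theorem skewaux_nhds_uebTopR (ξ : (G → ℝ) → ℝ) :
    @nhds _ (uebTopR G) ξ =
      ⨅ (B : Set (G → ℝ)) (_ : IsRUEB B),
        Filter.comap (skewauxEval B) (𝓝 (skewauxEval B ξ)) := by
  rw [uebTopR, uebUniformityR]
  simp +instances only [UniformSpace.toTopologicalSpace_iInf, _root_.nhds_iInf,
    UniformSpace.toTopologicalSpace_comap, nhds_induced]
  rfl

theorem skewaux_comap_eval_basis (B : Set (G → ℝ)) (ξ : (G → ℝ) → ℝ) :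
    (Filter.comap (skewauxEval B) (𝓝 (skewauxEval B ξ))).HasBasis (fun ε : ℝ => 0 < ε)
      (fun ε => {η | ∀ f ∈ B, |η f - ξ f| < ε}) := by
  have h := (UniformFun.hasBasis_nhds_of_basis (↥B) ℝ (skewauxEval B ξ)
      Metric.uniformity_basis_dist).comap (skewauxEval B)
  refine h.to_hasBasis (fun ε hε => ⟨ε, hε, fun η hη => ?_⟩)
    (fun ε hε => ⟨ε, hε, fun η hη f hf => ?_⟩)
  · simp only [Set.mem_preimage, Set.mem_setOf_eq, UniformFun.mem_gen]
    intro f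
    have := hη (f : G → ℝ) f.2
    simpa [skewauxEval, Real.dist_eq, abs_sub_comm] using this
  · simp only [Set.mem_preimage, Set.mem_setOf_eq, UniformFun.mem_gen] at hη
    have h2 := hη ⟨f, hf⟩
    simpa [skewauxEval, Real.dist_eq, abs_sub_comm] using h2

theorem skewaux_mem_nhds_uebTopR {ξ : (G → ℝ) → ℝ} {s : Set ((G → ℝ) → ℝ)} :
    s ∈ @nhds _ (uebTopR G) ξ ↔
      ∃ B : Set (G → ℝ), IsRUEB B ∧ ∃ ε > (0 : ℝ), {η | ∀ f ∈ B, |η f - ξ f| < ε} ⊆ s := by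
  rw [skewaux_nhds_uebTopR, iInf_subtype']
  haveI : Nonempty {B : Set (G → ℝ) // IsRUEB B} := ⟨⟨∅, skewaux_isRUEB_empty⟩⟩
  rw [Filter.mem_iInf_of_directed]
  · constructor
    · rintro ⟨⟨B, hB⟩, hs⟩
      obtain ⟨ε, hε, hsub⟩ := (skewaux_comap_eval_basis B ξ).mem_iff.mp hs
      exact ⟨B, hB, ε, hε, hsub⟩
    · rintro ⟨B, hB, ε, hε, hsub⟩
      exact ⟨⟨B, hB⟩, (skewaux_comap_eval_basis B ξ).mem_iff.mpr ⟨ε, hε, hsub⟩⟩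
  · rintro ⟨B₁, hB₁⟩ ⟨B₂, hB₂⟩
    refine ⟨⟨B₁ ∪ B₂, skewaux_isRUEB_union hB₁ hB₂⟩, ?_, ?_⟩
    · exact ((skewaux_comap_eval_basis _ ξ).le_basis_iff
        (skewaux_comap_eval_basis _ ξ)).mpr fun ε hε =>
          ⟨ε, hε, fun η hη f hf => hη f (Or.inl hf)⟩
    · exact ((skewaux_comap_eval_basis _ ξ).le_basis_iff
        (skewaux_comap_eval_basis _ ξ)).mpr fun ε hε =>
          ⟨ε, hε, fun η hη f hf => hη f (Or.inr hf)⟩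

theorem skewaux_mem_MeanUR_of_approx {ξ : (G → ℝ) → ℝ}
    (h : ∀ B : Set (G → ℝ), IsRUEB B → ∀ ε > (0 : ℝ),
      ∃ μ : G → ℝ, IsDelta μ ∧ ∀ f ∈ B, |ξ f - toFunc μ f| ≤ ε) :
    ξ ∈ MeanUR G := by
  letI := uebTopR G
  rw [MeanUR, mem_closure_iff_nhds]
  intro t ht
  rw [skewaux_mem_nhds_uebTopR] at ht
  obtain ⟨B, hB, ε, hε, hsub⟩ := ht
  obtain ⟨μ, hμ, hfar⟩ := h B hB (ε / 2) (by linarith)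
  refine ⟨toFunc μ, hsub fun f hf => ?_, ⟨μ, hμ, rfl⟩⟩
  calc |toFunc μ f - ξ f| = |ξ f - toFunc μ f| := abs_sub_comm _ _
    _ ≤ ε / 2 := hfar f hf
    _ < ε := by linarith

theorem skewaux_continuous_precompose {T : (G → ℝ) → (G → ℝ)}
    (hT : ∀ B : Set (G → ℝ), IsRUEB B → IsLUEB (T '' B)) :
    @Continuous _ _ (uebTopL G) (uebTopR G) (fun ξ => fun f => ξ (T f)) := by
  letI : TopologicalSpace ((G → ℝ) → ℝ) := uebTopL G
  rw [uebTopR, uebUniformityR]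
  simp +instances only [UniformSpace.toTopologicalSpace_iInf]
  refine continuous_iInf_rng.mpr fun B => continuous_iInf_rng.mpr fun hB => ?_
  rw [UniformSpace.toTopologicalSpace_comap]
  refine continuous_induced_rng.mpr ?_
  have hmem : ∀ f : ↥B, T (f : G → ℝ) ∈ T '' B := fun f => ⟨f, f.2, rfl⟩
  have h1 : @Continuous _ _ (uebTopL G) _
      (fun ξ : (G → ℝ) → ℝ => UniformFun.ofFun fun f : ↥(T '' B) => ξ (f : G → ℝ)) := by
    rw [continuous_iff_le_induced]
    have hts : UniformFun.topologicalSpace ↥(T '' B) ℝ =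
        (UniformFun.uniformSpace ↥(T '' B) ℝ).toTopologicalSpace := rfl
    rw [uebTopL, hts,
      ← UniformSpace.toTopologicalSpace_comap (u := UniformFun.uniformSpace ↥(T '' B) ℝ)]
    exact UniformSpace.toTopologicalSpace_mono
      (iInf_le_of_le (T '' B) (iInf_le_of_le (hT B hB) le_rfl))
  have h2 := (UniformFun.precomp_uniformContinuous (α := ↥(T '' B)) (β := ℝ)
      (f := fun f : ↥B => (⟨T (f : G → ℝ), hmem f⟩ : ↥(T '' B)))).continuous
  exact h2.comp h1

end SkewAux
section SkewMeasure

open Set Function MeasureTheory Pointwise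

variable {G : Type*} [Group G] [TopologicalSpace G] [IsTopologicalGroup G]
  [T2Space G] [LocallyCompactSpace G]

theorem skewaux_ruc_of_compactSupport {θ : G → ℝ} (hθc : Continuous θ)
    (hθs : HasCompactSupport θ) {ε : ℝ} (hε : 0 < ε) :
    ∃ V ∈ 𝓝 (1 : G), (∀ v ∈ V, ∀ x, |θ x - θ (v * x)| ≤ ε) ∧ IsCompact (closure V) := by
  obtain ⟨W, hWc, hWn⟩ := exists_compact_mem_nhds (1 : G)
  set K₂ : Set G := W⁻¹ * tsupport θ ∪ tsupport θ with hK₂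
  have key : ∀ x : G, ∃ V ∈ 𝓝 (1 : G), ∃ O ∈ 𝓝 x,
      ∀ v ∈ V, ∀ y ∈ O, |θ (v * y) - θ x| ≤ ε / 2 := by
    intro x
    have hc : ContinuousAt (fun p : G × G => θ (p.1 * p.2)) (1, x) :=
      (hθc.comp continuous_mul).continuousAt
    have hball : {y : ℝ | |y - θ x| ≤ ε / 2} ∈ 𝓝 (θ ((1 : G) * x)) := by
      rw [one_mul]
      have h1 : Metric.closedBall (θ x) (ε / 2) ∈ 𝓝 (θ x) :=
        Metric.closedBall_mem_nhds _ (by linarith)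
      simpa [Metric.closedBall, Real.dist_eq] using h1
    have h2 := hc hball
    rw [nhds_prod_eq, Filter.mem_map, Filter.mem_prod_iff] at h2
    obtain ⟨V, hV, O, hO, hVO⟩ := h2
    exact ⟨V, hV, O, hO, fun v hv y hy => hVO (Set.mk_mem_prod hv hy)⟩
  choose V hV O hO hkey using key
  have hK₂c : IsCompact K₂ := ((hWc.inv).mul hθs).union hθs
  obtain ⟨t, -, ht⟩ := hK₂c.elim_nhds_subcover O (fun x _ => hO x)
  refine ⟨interior W ∩ ⋂ x ∈ t, V x,
    Filter.inter_mem (isOpen_interior.mem_nhds (mem_interior_iff_mem_nhds.mpr hWn))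
      ((Filter.biInter_finset_mem t).mpr fun x _ => hV x), ?_, ?_⟩
  · rintro v ⟨hvW', hvV⟩ x
    have hvW : v ∈ W := interior_subset hvW'
    by_cases hx : x ∈ K₂
    · have hxU := ht hx
      rw [Set.mem_iUnion₂] at hxU
      obtain ⟨z, hzt, hxO⟩ := hxU
      have h1 : |θ (v * x) - θ z| ≤ ε / 2 := by
        refine hkey z v ?_ x hxO
        exact Set.mem_iInter₂.mp hvV z hzt
      have h2 : |θ (1 * x) - θ z| ≤ ε / 2 :=
        hkey z 1 (mem_of_mem_nhds (hV z)) x hxO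
      rw [one_mul] at h2
      calc |θ x - θ (v * x)| = |(θ x - θ z) - (θ (v * x) - θ z)| := by ring_nf
        _ ≤ |θ x - θ z| + |θ (v * x) - θ z| := abs_sub _ _
        _ ≤ ε / 2 + ε / 2 := add_le_add h2 h1
        _ = ε := by ring
    · have h1 : θ x = 0 := by
        have : x ∉ tsupport θ := fun hc => hx (Or.inr hc)
        exact image_eq_zero_of_notMem_tsupport this
      have h2 : θ (v * x) = 0 := by
        by_contra hc
        have hmem : v * x ∈ tsupport θ := subset_tsupport _ hc
        have := Set.mul_mem_mul (Set.inv_mem_inv.mpr hvW) hmem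
        rw [inv_mul_cancel_left] at this
        exact hx (Or.inl this)
      simp only [h1, h2, sub_zero, abs_zero]
      linarith
  · exact hWc.closure_of_subset (Set.inter_subset_left.trans interior_subset)

variable [MeasurableSpace G] [BorelSpace G]

theorem skewaux_exists_theta (ν : Measure G) [ν.IsHaarMeasure] :
    ∃ θ : G → ℝ, Continuous θ ∧ HasCompactSupport θ ∧ (∀ t, 0 ≤ θ t) ∧ ∫ t, θ t ∂ν = 1 := by
  obtain ⟨f, f_comp, f_nonneg, f_one⟩ := exists_continuous_nonneg_pos (1 : G)
  have hfint : Integrable (⇑f) ν := f.continuous.integrable_of_hasCompactSupport f_comp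
  have hpos : 0 < ∫ t, f t ∂ν := by
    rw [integral_pos_iff_support_of_nonneg f_nonneg hfint]
    have hopen : IsOpen (support ⇑f) := by
      rw [Function.support_eq_preimage]
      exact isClosed_singleton.isOpen_compl.preimage f.continuous
    exact hopen.measure_pos ν ⟨1, f_one⟩
  refine ⟨fun t => f t * (∫ s, f s ∂ν)⁻¹, f.continuous.mul continuous_const, ?_,
    fun t => mul_nonneg (f_nonneg t) (inv_nonneg.mpr hpos.le), ?_⟩
  · exact f_comp.mul_right
  · rw [integral_mul_const]
    exact mul_inv_cancel₀ hpos.ne'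

end SkewMeasure
section SkewConv

open Set Function MeasureTheory Pointwise

variable {G : Type*} [Group G] [TopologicalSpace G] [IsTopologicalGroup G]
  [T2Space G] [LocallyCompactSpace G] [MeasurableSpace G] [BorelSpace G]

/-- The smoothing operator `T f x = ∫ f (x t) θ(t) dν(t)`. -/
noncomputable def skewauxT (ν : Measure G) (θ : G → ℝ) : (G → ℝ) → (G → ℝ) :=
  fun f x => ∫ t, f (x * t) * θ t ∂ν

variable (ν : Measure G) [ν.IsHaarMeasure] {θ : G → ℝ}

theorem skewaux_integrable_aux (hθc : Continuous θ) (hθs : HasCompactSupport θ)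
    {f : G → ℝ} (hf : Continuous f) (x : G) :
    Integrable (fun t => f (x * t) * θ t) ν := by
  apply Continuous.integrable_of_hasCompactSupport
  · exact (hf.comp (continuous_const.mul continuous_id)).mul hθc
  · exact hθs.mul_left

theorem skewauxT_bound (hθc : Continuous θ) (hθs : HasCompactSupport θ)
    (hθ0 : ∀ t, 0 ≤ θ t) (hθ1 : ∫ t, θ t ∂ν = 1) {f : G → ℝ} (hf : Continuous f)
    {C : ℝ} (hfC : ∀ x, |f x| ≤ C) (x : G) : |skewauxT ν θ f x| ≤ C := by
  have h1 : |∫ t, f (x * t) * θ t ∂ν| ≤ ∫ t, |f (x * t) * θ t| ∂ν := by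
    have := norm_integral_le_integral_norm (μ := ν) (fun t => f (x * t) * θ t)
    simp only [Real.norm_eq_abs] at this
    exact this
  refine h1.trans ?_
  have h2 : ∫ t, |f (x * t) * θ t| ∂ν ≤ ∫ t, C * θ t ∂ν := by
    refine integral_mono (skewaux_integrable_aux ν hθc hθs hf x).abs
      ((hθc.integrable_of_hasCompactSupport hθs).const_mul C) fun t => ?_
    rw [abs_mul, abs_of_nonneg (hθ0 t)]
    exact mul_le_mul_of_nonneg_right (hfC _) (hθ0 t)
  refine h2.trans (le_of_eq ?_)
  rw [integral_const_mul, hθ1, mul_one]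

theorem skewauxT_translate (u x : G) (f : G → ℝ) :
    skewauxT ν θ f (x * u) = ∫ t, f (x * t) * θ (u⁻¹ * t) ∂ν := by
  have h := integral_mul_left_eq_self (μ := ν) (fun t => f (x * t) * θ (u⁻¹ * t)) u
  rw [skewauxT, ← h]
  congr 1
  funext t
  rw [inv_mul_cancel_left, mul_assoc]

theorem skewaux_isLUEB_image (hθc : Continuous θ) (hθs : HasCompactSupport θ)
    (hθ0 : ∀ t, 0 ≤ θ t) (hθ1 : ∫ t, θ t ∂ν = 1)
    {B : Set (G → ℝ)} (hB : IsRUEB B) : IsLUEB (skewauxT ν θ '' B) := by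
  obtain ⟨C, hC⟩ := hB.1
  set D : ℝ := max C 0 + 1 with hD
  have hD0 : (0 : ℝ) < D := by positivity
  have hfC : ∀ f ∈ B, ∀ x, |f x| ≤ D := fun f hf x =>
    (hC f hf x).trans ((le_max_left _ _).trans (by linarith))
  constructor
  · refine ⟨D, ?_⟩
    rintro h ⟨f, hf, rfl⟩ x
    exact skewauxT_bound ν hθc hθs hθ0 hθ1 (skewaux_continuous_of_mem_RUEB hB hf) (hfC f hf) x
  · intro ε hε
    obtain ⟨W, hWn, -, hWc⟩ := skewaux_ruc_of_compactSupport hθc hθs one_pos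
    set K' : Set G := tsupport θ ∪ closure W * tsupport θ with hK'
    have hK'c : IsCompact K' := hθs.union (hWc.mul hθs)
    set M : ℝ := (ν K').toReal + 1 with hM
    have hM0 : 0 < M := by
      have := ENNReal.toReal_nonneg (a := ν K')
      linarith
    set δ : ℝ := ε / (D * M) with hδ
    have hδ0 : 0 < δ := by positivity
    obtain ⟨V, hVn, hVprop, -⟩ := skewaux_ruc_of_compactSupport hθc hθs hδ0
    have hinv : (fun u : G => u⁻¹) ⁻¹' V ∈ 𝓝 (1 : G) := by
      refine continuous_inv.continuousAt.preimage_mem_nhds ?_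
      rwa [inv_one]
    refine ⟨W ∩ (fun u : G => u⁻¹) ⁻¹' V, Filter.inter_mem hWn hinv, ?_⟩
    rintro u ⟨huW, huV⟩ h ⟨f, hf, rfl⟩ x
    have hfcont : Continuous f := skewaux_continuous_of_mem_RUEB hB hf
    -- second integrand
    have hcs2 : HasCompactSupport fun t => θ (u⁻¹ * t) :=
      hθs.comp_homeomorph (Homeomorph.mulLeft u⁻¹)
    have hint1 : Integrable (fun t => f (x * t) * θ t) ν :=
      skewaux_integrable_aux ν hθc hθs hfcont x
    have hint2 : Integrable (fun t => f (x * t) * θ (u⁻¹ * t)) ν := by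
      apply Continuous.integrable_of_hasCompactSupport
      · exact (hfcont.comp (continuous_const.mul continuous_id)).mul
          (hθc.comp (continuous_const.mul continuous_id))
      · exact hcs2.mul_left
    rw [skewauxT_translate ν u x f]
    rw [show skewauxT ν θ f x = ∫ t, f (x * t) * θ t ∂ν from rfl]
    rw [← integral_sub hint1 hint2]
    have habs : |∫ t, (f (x * t) * θ t - f (x * t) * θ (u⁻¹ * t)) ∂ν| ≤
        ∫ t, |f (x * t) * θ t - f (x * t) * θ (u⁻¹ * t)| ∂ν := by
      have := norm_integral_le_integral_norm (μ := ν)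
        (fun t => f (x * t) * θ t - f (x * t) * θ (u⁻¹ * t))
      simp only [Real.norm_eq_abs] at this
      exact this
    refine habs.trans ?_
    have hK'meas : MeasurableSet K' := hK'c.isClosed.measurableSet
    have hbd : ∀ t, |f (x * t) * θ t - f (x * t) * θ (u⁻¹ * t)| ≤
        K'.indicator (fun _ => D * δ) t := by
      intro t
      by_cases ht : t ∈ K'
      · rw [Set.indicator_of_mem ht]
        rw [← mul_sub, abs_mul]
        have h1 : |θ t - θ (u⁻¹ * t)| ≤ δ := hVprop u⁻¹ huV t
        exact mul_le_mul (hfC f hf _) h1 (abs_nonneg _) (le_of_lt hD0)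
      · rw [Set.indicator_of_notMem ht]
        have h1 : θ t = 0 := by
          refine image_eq_zero_of_notMem_tsupport fun hc => ht (Or.inl hc)
        have h2 : θ (u⁻¹ * t) = 0 := by
          by_contra hc
          have hmem : u⁻¹ * t ∈ tsupport θ := subset_tsupport _ hc
          have := Set.mul_mem_mul (subset_closure huW) hmem
          rw [mul_inv_cancel_left] at this
          exact ht (Or.inr this)
        simp [h1, h2]
    have hindint : Integrable (K'.indicator fun _ : G => D * δ) ν :=
      (integrable_indicator_iff hK'meas).mpr
        (integrableOn_const hK'c.measure_lt_top.ne)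
    have hmono : ∫ t, |f (x * t) * θ t - f (x * t) * θ (u⁻¹ * t)| ∂ν ≤
        ∫ t, K'.indicator (fun _ => D * δ) t ∂ν :=
      integral_mono (hint1.sub hint2).abs hindint hbd
    refine hmono.trans ?_
    rw [integral_indicator_const _ hK'meas]
    have hle : (ν K').toReal ≤ M := by rw [hM]; linarith
    have : (ν K').toReal • (D * δ) ≤ M * (D * δ) := by
      rw [smul_eq_mul]
      exact mul_le_mul_of_nonneg_right hle (by positivity)
    refine this.trans (le_of_eq ?_)
    rw [hδ]
    field_simp

end SkewConv
section SkewDelta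

open Set Function MeasureTheory Pointwise

variable {G : Type*} [Group G] [TopologicalSpace G] [IsTopologicalGroup G]
  [T2Space G] [LocallyCompactSpace G] [MeasurableSpace G] [BorelSpace G]
  (ν : Measure G) [ν.IsHaarMeasure] {θ : G → ℝ}

theorem skewaux_delta_approx (hθc : Continuous θ) (hθs : HasCompactSupport θ)
    (hθ0 : ∀ t, 0 ≤ θ t) (hθ1 : ∫ t, θ t ∂ν = 1)
    {μ : G → ℝ} (hμ : IsDelta μ) {B : Set (G → ℝ)} (hB : IsRUEB B) {ε : ℝ} (hε : 0 < ε) :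
    ∃ d : G → ℝ, IsDelta d ∧ ∀ f ∈ B, |dpair μ (skewauxT ν θ f) - dpair d f| ≤ ε := by
  classical
  obtain ⟨hfin, hpos, hsum⟩ := hμ
  set F : Finset G := hfin.toFinset with hF
  have hμsum : ∑ x ∈ F, μ x = 1 := by
    rw [← hsum]
    exact (finsum_eq_finset_sum_of_support_subset μ (by simp [hF])).symm
  set S : Set G := (F : Set G) * tsupport θ with hS
  have hSc : IsCompact S := F.finite_toSet.isCompact.mul hθs
  obtain ⟨U, hUn, hUprop⟩ := hB.2 (ε / 2) (by linarith)
  obtain ⟨V, hVU, hVopen, hV1⟩ := mem_nhds_iff.mp hUn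
  have hcov : ∀ s ∈ S, V * {s} ∈ 𝓝 s := by
    intro s _
    refine hVopen.mul_right.mem_nhds ?_
    exact ⟨1, hV1, s, Set.mem_singleton s, one_mul s⟩
  obtain ⟨t, -, hcover⟩ := hSc.elim_nhds_subcover (fun s => V * {s}) hcov
  set l : List G := t.toList with hl
  set xj : Fin l.length → G := fun j => l.get j with hxj
  have hxjt : ∀ j, xj j ∈ t := fun j => Finset.mem_toList.mp (l.get_mem j)
  set A : Fin l.length → Set G := fun j =>
    ((V * {xj j}) ∩ S) \ ⋃ (k : Fin l.length) (_ : (k : ℕ) < (j : ℕ)), V * {xj k} with hA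
  have hAmeas : ∀ j, MeasurableSet (A j) := by
    intro j
    refine ((hVopen.mul_right.measurableSet.inter hSc.isClosed.measurableSet).diff ?_)
    exact MeasurableSet.iUnion fun k =>
      MeasurableSet.iUnion fun _ => hVopen.mul_right.measurableSet
  have hAsub : ∀ j, A j ⊆ S := fun j s hs => hs.1.2
  have hAsubV : ∀ j, A j ⊆ V * {xj j} := fun j s hs => hs.1.1
  -- unique covering index
  have huniq : ∀ s ∈ S, ∃ j, s ∈ A j ∧ ∀ k, k ≠ j → s ∉ A k := by
    intro s hs
    have hex : ∃ j : Fin l.length, s ∈ V * {xj j} := by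
      have h1 := hcover hs
      rw [Set.mem_iUnion₂] at h1
      obtain ⟨z, hzt, hsz⟩ := h1
      obtain ⟨j, hj⟩ := List.mem_iff_get.mp (Finset.mem_toList.mpr hzt)
      exact ⟨j, by rw [hxj]; subst hj; exact hsz⟩
    set jset : Finset (Fin l.length) :=
      Finset.univ.filter (fun j => s ∈ V * {xj j}) with hjset
    have hjne : jset.Nonempty :=
      ⟨hex.choose, Finset.mem_filter.mpr ⟨Finset.mem_univ _, hex.choose_spec⟩⟩
    set j₀ := jset.min' hjne with hj₀
    have hj₀mem : s ∈ V * {xj j₀} := by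
      have := jset.min'_mem hjne
      simp only [hjset, Finset.mem_filter] at this
      exact this.2
    have hj₀min : ∀ k : Fin l.length, (k : ℕ) < (j₀ : ℕ) → s ∉ V * {xj k} := by
      intro k hk hsk
      have hle : j₀ ≤ k := jset.min'_le k (Finset.mem_filter.mpr ⟨Finset.mem_univ _, hsk⟩)
      rw [Fin.le_def] at hle
      omega
    have hsA : s ∈ A j₀ := by
      refine ⟨⟨hj₀mem, hs⟩, ?_⟩
      simp only [Set.mem_iUnion]
      rintro ⟨k, hk, hsk⟩
      exact hj₀min k hk hsk
    refine ⟨j₀, hsA, fun k hk hsk => ?_⟩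
    rcases lt_or_gt_of_ne hk with hlt | hgt
    · exact hj₀min k hlt hsk.1.1
    · exact hsk.2 (Set.mem_iUnion.mpr ⟨j₀, Set.mem_iUnion.mpr ⟨hgt, hj₀mem⟩⟩)
  -- indicator partition identity
  have hind : ∀ s : G, (∑ j : Fin l.length, (A j).indicator (fun _ => (1 : ℝ)) s) =
      S.indicator (fun _ => (1 : ℝ)) s := by
    intro s
    by_cases hs : s ∈ S
    · obtain ⟨j, hj, hother⟩ := huniq s hs
      rw [Set.indicator_of_mem hs]
      rw [Finset.sum_eq_single j]
      · rw [Set.indicator_of_mem hj]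
      · intro k _ hkj
        exact Set.indicator_of_notMem (hother k hkj) _
      · intro hj'; exact absurd (Finset.mem_univ j) hj'
    · rw [Set.indicator_of_notMem hs]
      exact Finset.sum_eq_zero fun j _ =>
        Set.indicator_of_notMem (fun hc => hs (hAsub j hc)) _
  -- integrability of indicator pieces
  have hintA : ∀ (j) (x : G),
      Integrable (fun u => (A j).indicator (fun _ => (1 : ℝ)) (x * u) * θ u) ν := by
    intro j x
    have hmeas : Measurable fun u : G => (A j).indicator (fun _ => (1 : ℝ)) (x * u) :=
      (measurable_one.indicator (hAmeas j)).comp (measurable_const_mul x)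
    refine Integrable.mono' (hθc.integrable_of_hasCompactSupport hθs)
      (hmeas.mul hθc.measurable).aestronglyMeasurable
      (Filter.Eventually.of_forall fun u => ?_)
    rw [Real.norm_eq_abs, abs_mul]
    have h1 : |(A j).indicator (fun _ => (1 : ℝ)) (x * u)| ≤ 1 := by
      rw [Set.indicator_apply]
      split_ifs <;> simp
    calc |(A j).indicator (fun _ => (1 : ℝ)) (x * u)| * |θ u| ≤ 1 * |θ u| :=
          mul_le_mul_of_nonneg_right h1 (abs_nonneg _)
      _ = θ u := by rw [one_mul, abs_of_nonneg (hθ0 u)]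
  have hSind : ∀ x ∈ F, ∀ u : G, S.indicator (fun _ => (1 : ℝ)) (x * u) * θ u = θ u := by
    intro x hx u
    by_cases hu : θ u = 0
    · simp [hu]
    · have humem : u ∈ tsupport θ := subset_tsupport θ hu
      have : x * u ∈ S := Set.mul_mem_mul (Finset.mem_coe.mpr hx) humem
      rw [Set.indicator_of_mem this, one_mul]
  -- weights
  set w : Fin l.length → ℝ := fun j =>
    ∑ x ∈ F, μ x * ∫ u, (A j).indicator (fun _ => (1 : ℝ)) (x * u) * θ u ∂ν with hw
  have hw0 : ∀ j, 0 ≤ w j := fun j =>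
    Finset.sum_nonneg fun x _ => mul_nonneg (hpos x) (integral_nonneg fun u =>
      mul_nonneg (Set.indicator_nonneg (fun _ _ => zero_le_one) _) (hθ0 u))
  have hwsum : ∑ j : Fin l.length, w j = 1 := by
    simp only [hw]
    rw [Finset.sum_comm]
    have hx1 : ∀ x ∈ F, (∑ j : Fin l.length,
        μ x * ∫ u, (A j).indicator (fun _ => (1 : ℝ)) (x * u) * θ u ∂ν) = μ x := by
      intro x hx
      rw [← Finset.mul_sum,
        ← integral_finset_sum Finset.univ (fun j _ => hintA j x)]
      have hpt : (fun u => ∑ j : Fin l.length,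
          (A j).indicator (fun _ => (1 : ℝ)) (x * u) * θ u) = θ := by
        funext u
        rw [← Finset.sum_mul, hind (x * u), hSind x hx u]
      rw [hpt, hθ1, mul_one]
    rw [Finset.sum_congr rfl hx1, hμsum]
  -- the discrete density
  set d : G → ℝ := fun y => ∑ j : Fin l.length, if xj j = y then w j else 0 with hd
  have hdsupp : support d ⊆ (t : Set G) := by
    intro y hy
    rw [Function.mem_support] at hy
    by_contra hc
    apply hy
    simp only [hd]
    refine Finset.sum_eq_zero fun j _ => if_neg fun he => hc ?_
    rw [← he]
    exact Finset.mem_coe.mpr (hxjt j)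
  have hdelta : IsDelta d := by
    refine ⟨Set.Finite.subset t.finite_toSet hdsupp, fun y => ?_, ?_⟩
    · simp only [hd]
      exact Finset.sum_nonneg fun j _ => by
        split_ifs with hyj
        exacts [hw0 j, le_rfl]
    · rw [finsum_eq_finset_sum_of_support_subset d hdsupp]
      simp only [hd]
      rw [Finset.sum_comm]
      rw [Finset.sum_congr rfl fun j (_ : j ∈ Finset.univ) => Finset.sum_ite_eq t (xj j) fun _ => w j]
      rw [Finset.sum_congr rfl fun j (_ : j ∈ Finset.univ) => if_pos (hxjt j)]
      exact hwsum
  have hdpair : ∀ f : G → ℝ, dpair d f = ∑ j : Fin l.length, w j * f (xj j) := by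
    intro f
    have hsupp2 : support (fun y => d y * f y) ⊆ (t : Set G) :=
      (Function.support_mul_subset_left d f).trans hdsupp
    rw [dpair, finsum_eq_finset_sum_of_support_subset _ hsupp2]
    have hterm : ∀ y, d y * f y =
        ∑ j : Fin l.length, if xj j = y then w j * f y else 0 := by
      intro y
      simp only [hd]
      rw [Finset.sum_mul]
      exact Finset.sum_congr rfl fun j _ => by split_ifs <;> simp
    rw [Finset.sum_congr rfl fun y _ => hterm y]
    rw [Finset.sum_comm]
    refine Finset.sum_congr rfl fun j _ => ?_
    rw [Finset.sum_ite_eq t (xj j) fun y => w j * f y, if_pos (hxjt j)]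
  -- the estimate
  refine ⟨d, hdelta, fun f hf => ?_⟩
  have hfcont : Continuous f := skewaux_continuous_of_mem_RUEB hB hf
  have hdpairμ : dpair μ (skewauxT ν θ f) =
      ∑ x ∈ F, μ x * ∫ u, f (x * u) * θ u ∂ν := by
    rw [dpair]
    exact finsum_eq_finset_sum_of_support_subset _
      ((Function.support_mul_subset_left _ _).trans (by simp [hF]))
  set h : G → ℝ := fun s =>
    ∑ j : Fin l.length, (A j).indicator (fun _ => (1 : ℝ)) s * f (xj j) with hh
  have hinth : ∀ x : G, Integrable (fun u => h (x * u) * θ u) ν := by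
    intro x
    have hfn : (fun u => h (x * u) * θ u) = fun u =>
        ∑ j : Fin l.length, (A j).indicator (fun _ => (1 : ℝ)) (x * u) * f (xj j) * θ u := by
      funext u
      simp only [hh]
      rw [Finset.sum_mul]
    rw [hfn]
    exact integrable_finset_sum _ fun j _ =>
      ((hintA j x).mul_const (f (xj j))).congr (Filter.Eventually.of_forall fun u => by ring)
  have hJw : ∀ x : G,
      (∑ j : Fin l.length,
        (∫ u, (A j).indicator (fun _ => (1 : ℝ)) (x * u) * θ u ∂ν) * f (xj j))
      = ∫ u, h (x * u) * θ u ∂ν := by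
    intro x
    have h1 : ∀ j : Fin l.length,
        (∫ u, (A j).indicator (fun _ => (1 : ℝ)) (x * u) * θ u ∂ν) * f (xj j)
        = ∫ u, (A j).indicator (fun _ => (1 : ℝ)) (x * u) * f (xj j) * θ u ∂ν := by
      intro j
      rw [← integral_mul_const]
      exact integral_congr_ae (Filter.Eventually.of_forall fun u => by ring)
    rw [Finset.sum_congr rfl fun j _ => h1 j]
    rw [← integral_finset_sum Finset.univ (fun j _ =>
      ((hintA j x).mul_const (f (xj j))).congr (Filter.Eventually.of_forall fun u => by ring))]
    refine integral_congr_ae (Filter.Eventually.of_forall fun u => ?_)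
    simp only [hh]
    rw [Finset.sum_mul]
  have hsum_rw : ∑ j : Fin l.length, w j * f (xj j) =
      ∑ x ∈ F, μ x * ∫ u, h (x * u) * θ u ∂ν := by
    calc ∑ j : Fin l.length, w j * f (xj j)
        = ∑ j : Fin l.length, ∑ x ∈ F,
            μ x * (∫ u, (A j).indicator (fun _ => (1 : ℝ)) (x * u) * θ u ∂ν) * f (xj j) := by
          refine Finset.sum_congr rfl fun j _ => ?_
          simp only [hw]
          rw [Finset.sum_mul]
      _ = ∑ x ∈ F, ∑ j : Fin l.length,
            μ x * (∫ u, (A j).indicator (fun _ => (1 : ℝ)) (x * u) * θ u ∂ν) * f (xj j) :=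
          Finset.sum_comm
      _ = ∑ x ∈ F, μ x * ∫ u, h (x * u) * θ u ∂ν := by
          refine Finset.sum_congr rfl fun x _ => ?_
          rw [← hJw x, Finset.mul_sum]
          exact Finset.sum_congr rfl fun j _ => by ring
  rw [hdpairμ, hdpair f, hsum_rw, ← Finset.sum_sub_distrib]
  -- pointwise comparison of f and h on S
  have hfh : ∀ s ∈ S, |f s - h s| ≤ ε / 2 := by
    intro s hs
    obtain ⟨j, hj, hother⟩ := huniq s hs
    have hhs : h s = f (xj j) := by
      simp only [hh]
      rw [Finset.sum_eq_single j]
      · rw [Set.indicator_of_mem hj, one_mul]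
      · intro k _ hkj
        rw [Set.indicator_of_notMem (hother k hkj), zero_mul]
      · intro hj'; exact absurd (Finset.mem_univ j) hj'
    rw [hhs]
    obtain ⟨v, hv, y, hy, hvy⟩ := hAsubV j hj
    rw [Set.mem_singleton_iff] at hy
    subst hy
    rw [← hvy, abs_sub_comm]
    exact hUprop v (hVU hv) f hf (xj j)
  have hbound : ∀ x ∈ F,
      |μ x * ∫ u, f (x * u) * θ u ∂ν - μ x * ∫ u, h (x * u) * θ u ∂ν| ≤ μ x * (ε / 2) := by
    intro x hx
    rw [← mul_sub, abs_mul, abs_of_nonneg (hpos x)]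
    refine mul_le_mul_of_nonneg_left ?_ (hpos x)
    rw [← integral_sub (skewaux_integrable_aux ν hθc hθs hfcont x) (hinth x)]
    have habs : |∫ u, (f (x * u) * θ u - h (x * u) * θ u) ∂ν| ≤
        ∫ u, |f (x * u) * θ u - h (x * u) * θ u| ∂ν := by
      have := norm_integral_le_integral_norm (μ := ν)
        (fun u => f (x * u) * θ u - h (x * u) * θ u)
      simp only [Real.norm_eq_abs] at this
      exact this
    refine habs.trans ?_
    have hmono : ∫ u, |f (x * u) * θ u - h (x * u) * θ u| ∂ν ≤
        ∫ u, ε / 2 * θ u ∂ν := by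
      refine integral_mono
        ((skewaux_integrable_aux ν hθc hθs hfcont x).sub (hinth x)).abs
        ((hθc.integrable_of_hasCompactSupport hθs).const_mul _) fun u => ?_
      by_cases hu : θ u = 0
      · simp [hu]
      · have hmem : x * u ∈ S :=
          Set.mul_mem_mul (Finset.mem_coe.mpr hx) (subset_tsupport θ hu)
        rw [← sub_mul, abs_mul, abs_of_nonneg (hθ0 u)]
        exact mul_le_mul_of_nonneg_right (hfh _ hmem) (hθ0 u)
    refine hmono.trans (le_of_eq ?_)
    rw [integral_const_mul, hθ1, mul_one]
  calc |∑ x ∈ F, (μ x * ∫ u, f (x * u) * θ u ∂ν - μ x * ∫ u, h (x * u) * θ u ∂ν)|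
      ≤ ∑ x ∈ F, |μ x * ∫ u, f (x * u) * θ u ∂ν - μ x * ∫ u, h (x * u) * θ u ∂ν| :=
        Finset.abs_sum_le_sum_abs _ _
    _ ≤ ∑ x ∈ F, μ x * (ε / 2) := Finset.sum_le_sum hbound
    _ = ε / 2 := by rw [← Finset.sum_mul, hμsum, one_mul]
    _ ≤ ε := by linarith

end SkewDelta
/-- Corollary 4.8: every skew-amenable continuous action of a locally compact group on a
compact space is amenable. -/
theorem skew_amenable_implies_amenable {G : Type*} [Group G] [TopologicalSpace G]
    [IsTopologicalGroup G] [LocallyCompactSpace G] [T2Space G]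
    {X : Type*} [TopologicalSpace X] [CompactSpace X] [T2Space X]
    [MulAction G X] [ContinuousSMul G X]
    (h : SkewAmenableAction (fun (g : G) (x : X) => g • x)) :
    AmenableAction (fun (g : G) (x : X) => g • x) := by
  classical
  letI : MeasurableSpace G := borel G
  haveI : BorelSpace G := ⟨rfl⟩
  obtain ⟨ι, pι, hne, hdir, μ, hmem, hcont, happ⟩ := h
  set ν : Measure G := MeasureTheory.Measure.haar with hν
  haveI : ν.IsHaarMeasure := MeasureTheory.Measure.isHaarMeasure_haarMeasure _
  obtain ⟨θ, hθc, hθs, hθ0, hθ1⟩ := skewaux_exists_theta ν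
  set T : (G → ℝ) → (G → ℝ) := skewauxT ν θ with hT
  set Φ : ((G → ℝ) → ℝ) → ((G → ℝ) → ℝ) := fun ξ f => ξ (T f) with hΦ
  have hTB : ∀ B : Set (G → ℝ), IsRUEB B → IsLUEB (T '' B) :=
    fun B hB => skewaux_isLUEB_image ν hθc hθs hθ0 hθ1 hB
  have hΦcont : @Continuous _ _ (uebTopL G) (uebTopR G) Φ :=
    skewaux_continuous_precompose hTB
  have hΦdelta : ∀ μ0 : G → ℝ, IsDelta μ0 → Φ (toFunc μ0) ∈ MeanUR G := by
    intro μ0 hμ0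
    refine skewaux_mem_MeanUR_of_approx fun B hB ε hε => ?_
    obtain ⟨d, hd, hdapprox⟩ := skewaux_delta_approx ν hθc hθs hθ0 hθ1 hμ0 hB hε
    exact ⟨d, hd, fun f hf => hdapprox f hf⟩
  have hΦmaps : ∀ ξ ∈ MeanUL G, Φ ξ ∈ MeanUR G := by
    intro ξ hξ
    have hmapsto : Set.MapsTo Φ (toFunc '' {μ0 : G → ℝ | IsDelta μ0}) (MeanUR G) := by
      rintro _ ⟨μ0, hμ0, rfl⟩
      exact hΦdelta μ0 hμ0
    have hcl : Φ ξ ∈ @closure _ (uebTopR G) (MeanUR G) :=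
      @map_mem_closure _ _ (uebTopL G) (uebTopR G) Φ
        (toFunc '' {μ0 : G → ℝ | IsDelta μ0}) ξ (MeanUR G) hΦcont hξ hmapsto
    have h2 : @closure _ (uebTopR G) (MeanUR G) = MeanUR G :=
      @closure_closure ((G → ℝ) → ℝ) (uebTopR G) (toFunc '' {μ0 : G → ℝ | IsDelta μ0})
    rw [h2] at hcl
    exact hcl
  refine ⟨ι, pι, hne, hdir, fun i x => Φ (μ i x), fun i x => hΦmaps _ (hmem i x),
    fun i => ?_, ?_⟩
  · exact skewaux_cont_comp hΦcont (hcont i)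
  · intro g B hB ε hε
    obtain ⟨i₀, hi₀⟩ := happ g (T '' B) (hTB B hB) ε hε
    refine ⟨i₀, fun i hi x f hf => ?_⟩
    show |actF g (Φ (μ i x)) f - Φ (μ i (g • x)) f| ≤ ε
    have key1 : actF g (Φ (μ i x)) f = actF g (μ i x) (T f) := by
      show (μ i x) (T fun y => f (g * y)) = (μ i x) fun y => T f (g * y)
      congr 1
      funext y
      show ∫ u, f (g * (y * u)) * θ u ∂ν = ∫ u, f (g * y * u) * θ u ∂ν
      simp only [mul_assoc]
    have key2 : Φ (μ i (g • x)) f = μ i (g • x) (T f) := rfl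
    rw [key1, key2]
    exact hi₀ i hi x (T f) ⟨f, hf, rfl⟩
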